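/- Let n ≥ 1, let n₁,…,n_r be positive integers with n₁+⋯+n_r = n, partitioning {1,…,n} into consecutive blocks B₁,…,B_r, and let μ ∈ ℚⁿ be weakly decreasing on each block Bₖ. For each k, writing (ν₁,…,ν_{nₖ}) for the restriction of μ to Bₖ, set dₖ := max over 1 ≤ j ≤ nₖ−1 of (ν₁+⋯+νⱼ) − (j/nₖ)(ν₁+⋯+ν_{nₖ}) (with dₖ := 0 if nₖ = 1). Let σ be the weakly decreasing rearrangement of μ and set depth_G(μ) := max over 1 ≤ j ≤ n−1 of (σ₁+⋯+σⱼ) − (j/n)(σ₁+⋯+σₙ) (with depth_G(μ) := 0 if n = 1). Then max(0, d₁, …, d_r) ≤ depth_G(μ). -/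

import Mathlib

/-- Sum of the `j` entries of `μ` in positions `o, o+1, …, o+j-1` (0-indexed):
the `j`-th partial sum of the block of `μ` starting at offset `o`. -/
def blockPsum {n : ℕ} (μ : Fin n → ℚ) (o j : ℕ) : ℚ :=
  ∑ i ∈ Finset.univ.filter (fun i : Fin n => o ≤ (i : ℕ) ∧ (i : ℕ) < o + j), μ i

/-- The depth of the block of `μ` of length `m` starting at offset `o`:
`max_{1 ≤ j ≤ m−1} (ν₁+⋯+νⱼ) − (j/m)(ν₁+⋯+ν_m)`, with value `0` if `m ≤ 1`. -/
def blockDepth {n : ℕ} (μ : Fin n → ℚ) (o m : ℕ) : ℚ :=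
  if h : (Finset.Icc 1 (m - 1)).Nonempty then
    (Finset.Icc 1 (m - 1)).sup' h fun j : ℕ =>
      blockPsum μ o j - (j : ℚ) / (m : ℚ) * blockPsum μ o m
  else 0

/-- Offset of the `k`-th block: `n₁ + ⋯ + n_{k-1}`. -/
def offs {r : ℕ} (ns : Fin r → ℕ) (k : Fin r) : ℕ :=
  ∑ l ∈ Finset.univ.filter (fun l : Fin r => l < k), ns l

open Finset

lemma card_filter_ico {n : ℕ} (o j : ℕ) (h : o + j ≤ n) :
    (Finset.univ.filter (fun i : Fin n => o ≤ (i : ℕ) ∧ (i : ℕ) < o + j)).card = j := by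
  have himg : ((Finset.univ.filter
      (fun i : Fin n => o ≤ (i : ℕ) ∧ (i : ℕ) < o + j)).image Fin.val)
      = Finset.Ico o (o + j) := by
    ext a
    simp only [mem_image, mem_filter, mem_univ, true_and, mem_Ico]
    constructor
    · rintro ⟨i, hi, rfl⟩; exact hi
    · rintro ⟨h1, h2⟩; exact ⟨⟨a, by omega⟩, ⟨h1, h2⟩, rfl⟩
  have := congrArg Finset.card himg
  rwa [Finset.card_image_of_injective _ Fin.val_injective, Nat.card_Ico,
    Nat.add_sub_cancel_left] at this

lemma psum_lt {n : ℕ} (σ : Fin n → ℚ) (s : ℕ) :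
    blockPsum σ 0 s = ∑ i ∈ Finset.univ.filter (fun i : Fin n => (i : ℕ) < s), σ i := by
  unfold blockPsum
  apply Finset.sum_congr _ (fun _ _ => rfl)
  ext i; simp

lemma psum_full {n : ℕ} (σ : Fin n → ℚ) : blockPsum σ 0 n = ∑ i, σ i := by
  rw [psum_lt]
  apply Finset.sum_congr _ (fun _ _ => rfl)
  ext i; simp [i.isLt]

lemma card_filter_lt {n s : ℕ} (h : s ≤ n) :
    (Finset.univ.filter (fun i : Fin n => (i : ℕ) < s)).card = s := by
  have h2 := card_filter_ico (n := n) 0 s (by omega)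
  have he : (Finset.univ.filter (fun i : Fin n => (i : ℕ) < s))
      = (Finset.univ.filter (fun i : Fin n => 0 ≤ (i : ℕ) ∧ (i : ℕ) < 0 + s)) := by
    ext i; simp
  rw [he]; exact h2

lemma sum_le_psum {n : ℕ} {σ : Fin n → ℚ} (hanti : Antitone σ) (B : Finset (Fin n)) :
    ∑ i ∈ B, σ i ≤ ∑ i ∈ Finset.univ.filter (fun i : Fin n => (i : ℕ) < B.card), σ i := by
  set s := B.card with hs
  set I := Finset.univ.filter (fun i : Fin n => (i : ℕ) < s) with hI
  have hsn : s ≤ n := by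
    calc s ≤ Finset.univ.card := Finset.card_le_card (subset_univ B)
      _ = n := by simp
  have hIcard : I.card = s := card_filter_lt hsn
  have h1 := Finset.card_sdiff_add_card_inter B I
  have h2 := Finset.card_sdiff_add_card_inter I B
  rw [Finset.inter_comm I B] at h2
  have hcards : (B \ I).card = (I \ B).card := by omega
  have key : ∑ i ∈ B \ I, σ i ≤ ∑ i ∈ I \ B, σ i := by
    rcases (B \ I).eq_empty_or_nonempty with he | hne
    · have hIB : (I \ B) = ∅ := Finset.card_eq_zero.mp (by rw [← hcards, he]; simp)
      rw [he, hIB]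
    · obtain ⟨b, hb⟩ := hne
      have hbI : s ≤ (b : ℕ) := by
        have hm := (Finset.mem_sdiff.mp hb).2
        simp only [hI, mem_filter, mem_univ, true_and, not_lt] at hm
        exact hm
      have hsn' : s < n := lt_of_le_of_lt hbI b.isLt
      set x : Fin n := ⟨s, hsn'⟩ with hx
      calc ∑ i ∈ B \ I, σ i ≤ (B \ I).card • σ x := by
            apply Finset.sum_le_card_nsmul
            intro i hi
            have hm := (Finset.mem_sdiff.mp hi).2
            simp only [hI, mem_filter, mem_univ, true_and, not_lt] at hm
            exact hanti (by simpa [Fin.le_def, hx] using hm)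
        _ = (I \ B).card • σ x := by rw [hcards]
        _ ≤ ∑ i ∈ I \ B, σ i := by
            apply Finset.card_nsmul_le_sum
            intro i hi
            have hm := (Finset.mem_sdiff.mp hi).1
            simp only [hI, mem_filter, mem_univ, true_and] at hm
            exact hanti (by simp [Fin.le_def, hx]; omega)
  have hBsplit : ∑ i ∈ B ∩ I, σ i + ∑ i ∈ B \ I, σ i = ∑ i ∈ B, σ i :=
    Finset.sum_inter_add_sum_sdiff B I σ
  have hIsplit : ∑ i ∈ I ∩ B, σ i + ∑ i ∈ I \ B, σ i = ∑ i ∈ I, σ i :=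
    Finset.sum_inter_add_sum_sdiff I B σ
  rw [Finset.inter_comm I B] at hIsplit
  linarith

lemma depth_nonneg {n : ℕ} (hn : 1 ≤ n) (σ : Fin n → ℚ) (hanti : Antitone σ) :
    0 ≤ blockDepth σ 0 n := by
  rcases eq_or_lt_of_le hn with h1 | h2
  · rw [blockDepth, dif_neg (by simp [← h1])]
  · have hmem : 1 ∈ Finset.Icc 1 (n - 1) := by simp; omega
    rw [blockDepth, dif_pos ⟨1, hmem⟩]
    refine le_trans ?_ (Finset.le_sup' _ hmem)
    have h0 : 0 < n := by omega
    have hx : blockPsum σ 0 1 = σ ⟨0, h0⟩ := by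
      rw [psum_lt]
      rw [show Finset.univ.filter (fun i : Fin n => (i : ℕ) < 1) = {(⟨0, h0⟩ : Fin n)} from by
        ext i; simp [Fin.ext_iff, Nat.lt_one_iff]]
      simp
    have hub : ∑ i, σ i ≤ (n : ℚ) * σ ⟨0, h0⟩ := by
      calc ∑ i, σ i ≤ ∑ _i : Fin n, σ ⟨0, h0⟩ :=
            Finset.sum_le_sum (fun i _ => hanti (by simp [Fin.le_def]))
        _ = (n : ℚ) * σ ⟨0, h0⟩ := by simp [mul_comm]
    rw [hx, psum_full]
    have hn0 : (0 : ℚ) < n := by exact_mod_cast h0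
    rw [sub_nonneg, div_mul_eq_mul_div, div_le_iff₀ hn0]
    push_cast
    linarith

lemma master {n : ℕ} (hn : 1 ≤ n) (μ σ : Fin n → ℚ) (π : Equiv.Perm (Fin n))
    (hσ : ∀ i, σ i = μ (π i)) (hanti : Antitone σ)
    (c : Fin n → ℚ) (hc0 : ∀ i, 0 ≤ c i) (hc1 : ∀ i, c i ≤ 1) :
    ∑ i, c i * μ i - (∑ i, c i) / n * blockPsum σ 0 n ≤ blockDepth σ 0 n := by
  have hD := depth_nonneg hn σ hanti
  have hn0 : (0 : ℚ) < n := by exact_mod_cast hn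
  have hTμ : blockPsum σ 0 n = ∑ i, μ i := by
    rw [psum_full]
    simp_rw [hσ]
    exact Equiv.sum_comp π μ
  set T : ℚ := ∑ i, μ i with hTdef
  set w : Fin n → ℚ := fun i => μ i - T / n with hw
  set A := Finset.univ.filter (fun i => 0 < w i) with hA
  have hstep1 : ∑ i, c i * μ i - (∑ i, c i) / n * blockPsum σ 0 n = ∑ i, c i * w i := by
    rw [hTμ]
    have : ∑ i, c i * w i = ∑ i, c i * μ i - (∑ i, c i) * (T / n) := by
      simp only [hw, mul_sub]
      rw [Finset.sum_sub_distrib, ← Finset.sum_mul]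
    rw [this]
    ring
  have hstep2 : ∑ i, c i * w i ≤ ∑ i ∈ A, w i := by
    rw [hA, Finset.sum_filter]
    apply Finset.sum_le_sum
    intro i _
    by_cases h : 0 < w i
    · simp only [h, if_true]
      exact mul_le_of_le_one_left (le_of_lt h) (hc1 i)
    · simp only [h, if_false]
      exact mul_nonpos_of_nonneg_of_nonpos (hc0 i) (not_lt.mp h)
  set s := A.card with hscard
  rcases Nat.eq_zero_or_pos s with hs0 | hs1
  · have hAe : A = ∅ := Finset.card_eq_zero.mp hs0
    rw [hstep1]
    refine le_trans hstep2 ?_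
    rw [hAe]
    simpa using hD
  · have hAle : ∑ i ∈ A, μ i ≤
        ∑ i ∈ Finset.univ.filter (fun i : Fin n => (i : ℕ) < s), σ i := by
      have hq : ∑ i ∈ A.image π.symm, σ i = ∑ i ∈ A, μ i := by
        rw [Finset.sum_image (fun x _ y _ h => π.symm.injective h)]
        apply Finset.sum_congr rfl
        intro a _
        rw [hσ, Equiv.apply_symm_apply]
      have hcard : (A.image π.symm).card = s :=
        Finset.card_image_of_injective _ π.symm.injective
      have := sum_le_psum hanti (A.image π.symm)
      rwa [hq, hcard] at this
    have hsltn : s < n := by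
      by_contra h
      have hsn2 : s = n := by
        have : s ≤ n := by
          calc s ≤ Finset.univ.card := Finset.card_le_card (subset_univ A)
            _ = n := by simp
        omega
      have hAuniv : A = Finset.univ := Finset.eq_univ_of_card A (by simp; omega)
      have hApos : 0 < ∑ i ∈ A, w i := by
        apply Finset.sum_pos (fun i hi => (Finset.mem_filter.mp hi).2)
        rw [← hA, hAuniv]
        exact univ_nonempty_iff.mpr ⟨⟨0, by omega⟩⟩
      have hzero : ∑ i ∈ A, w i = 0 := by
        rw [hAuniv]
        simp only [hw]
        rw [Finset.sum_sub_distrib, Finset.sum_const, ← hTdef]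
        simp only [Finset.card_univ, Fintype.card_fin, nsmul_eq_mul]
        field_simp
        ring
      linarith
    have hmem : s ∈ Finset.Icc 1 (n - 1) := by simp [Finset.mem_Icc]; omega
    have hD' : blockPsum σ 0 s - (s : ℚ) / n * blockPsum σ 0 n ≤ blockDepth σ 0 n := by
      rw [blockDepth, dif_pos ⟨s, hmem⟩]
      exact Finset.le_sup'
        (fun j : ℕ => blockPsum σ 0 j - (j : ℚ) / (n : ℚ) * blockPsum σ 0 n) hmem
    have hAw : ∑ i ∈ A, w i = ∑ i ∈ A, μ i - (s : ℚ) * (T / n) := by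
      simp only [hw]
      rw [Finset.sum_sub_distrib, Finset.sum_const, ← hscard, nsmul_eq_mul]
    rw [hstep1]
    calc ∑ i, c i * w i ≤ ∑ i ∈ A, w i := hstep2
      _ = ∑ i ∈ A, μ i - (s : ℚ) * (T / n) := hAw
      _ ≤ blockPsum σ 0 s - (s : ℚ) / n * blockPsum σ 0 n := by
          rw [psum_lt, hTμ]
          have hr : (s : ℚ) * (T / n) = (s : ℚ) / n * T := by ring
          linarith [hAle]
      _ ≤ blockDepth σ 0 n := hD'

theorem stmt4 (n r : ℕ) (hn : 1 ≤ n) (ns : Fin r → ℕ) (hpos : ∀ k, 0 < ns k)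
    (hsum : ∑ k, ns k = n) (μ : Fin n → ℚ)
    (hblocks : ∀ k : Fin r, ∀ i j : Fin n,
      offs ns k ≤ (i : ℕ) → i ≤ j → (j : ℕ) < offs ns k + ns k → μ j ≤ μ i)
    (σ : Fin n → ℚ) (π : Equiv.Perm (Fin n))
    (hσ : ∀ i, σ i = μ (π i)) (hanti : Antitone σ) :
    0 ≤ blockDepth σ 0 n ∧
      ∀ k : Fin r, blockDepth μ (offs ns k) (ns k) ≤ blockDepth σ 0 n := by
  have hD0 := depth_nonneg hn σ hanti
  refine ⟨hD0, fun k => ?_⟩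
  set o := offs ns k with ho
  set m := ns k with hm
  have hom : o + m ≤ n := by
    rw [← hsum]
    have hdisj : Disjoint (Finset.univ.filter (fun l : Fin r => l < k)) {k} := by
      simp [Finset.disjoint_singleton_right]
    calc o + m = ∑ l ∈ (Finset.univ.filter (fun l : Fin r => l < k)) ∪ {k}, ns l := by
          rw [Finset.sum_union hdisj, ho, hm]
          simp [offs]
      _ ≤ ∑ l, ns l := Finset.sum_le_sum_of_subset (subset_univ _)
  rcases Nat.lt_or_ge m 2 with hm1 | hm2
  · have hmm : m - 1 = 0 := by omega
    rw [blockDepth, dif_neg (by simp [hmm])]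
    exact hD0
  · have hne : (Finset.Icc 1 (m - 1)).Nonempty := ⟨1, by simp; omega⟩
    rw [blockDepth, dif_pos hne]
    apply Finset.sup'_le
    intro j hj
    simp only [Finset.mem_Icc] at hj
    obtain ⟨hj1, hj2⟩ := hj
    have hjm : j < m := by omega
    have hmpos : 0 < m := hpos k
    have hm0 : (0 : ℚ) < m := by exact_mod_cast hmpos
    have hn0 : (0 : ℚ) < n := by exact_mod_cast hn
    set c : Fin n → ℚ := fun i =>
      if o ≤ (i : ℕ) ∧ (i : ℕ) < o + j then 1
      else if o ≤ (i : ℕ) ∧ (i : ℕ) < o + m then 0 else (j : ℚ) / m with hc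
    have hc0 : ∀ i, 0 ≤ c i := by
      intro i
      simp only [hc]
      split
      · norm_num
      split
      · norm_num
      · positivity
    have hc1 : ∀ i, c i ≤ 1 := by
      intro i
      simp only [hc]
      split
      · norm_num
      split
      · norm_num
      · rw [div_le_one hm0]; exact_mod_cast hjm.le
    have key := master hn μ σ π hσ hanti c hc0 hc1
    set Bj := Finset.univ.filter (fun i : Fin n => o ≤ (i : ℕ) ∧ (i : ℕ) < o + j) with hBj
    set Bm := Finset.univ.filter (fun i : Fin n => o ≤ (i : ℕ) ∧ (i : ℕ) < o + m) with hBm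
    have hsub : Bj ⊆ Bm := by
      intro i hi
      simp only [hBj, hBm, mem_filter, mem_univ, true_and] at hi ⊢
      omega
    have hcBj : Bj.card = j := card_filter_ico o j (by omega)
    have hcBm : Bm.card = m := card_filter_ico o m hom
    have hcBmc : (Bmᶜ).card = n - m := by
      rw [Finset.card_compl, hcBm]
      simp
    -- c values on the three regions
    have hcval1 : ∀ i ∈ Bj, c i = 1 := by
      intro i hi
      simp only [hBj, mem_filter, mem_univ, true_and] at hi
      simp only [hc, if_pos hi]
    have hcval2 : ∀ i ∈ Bm \ Bj, c i = 0 := by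
      intro i hi
      rw [mem_sdiff] at hi
      obtain ⟨hi1, hi2⟩ := hi
      simp only [hBm, mem_filter, mem_univ, true_and] at hi1
      simp only [hBj, mem_filter, mem_univ, true_and] at hi2
      simp only [hc, if_neg hi2, if_pos hi1]
    have hcval3 : ∀ i ∈ Bmᶜ, c i = (j : ℚ) / m := by
      intro i hi
      rw [Finset.mem_compl] at hi
      simp only [hBm, mem_filter, mem_univ, true_and] at hi
      have h1 : ¬(o ≤ (i : ℕ) ∧ (i : ℕ) < o + j) := by omega
      simp only [hc, if_neg h1, if_neg hi]
    have hsplitBm : ∀ f : Fin n → ℚ,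
        ∑ i ∈ Bm, f i = ∑ i ∈ Bj, f i + ∑ i ∈ Bm \ Bj, f i := by
      intro f
      rw [← Finset.sum_sdiff hsub]
      ring
    have hsum1 : ∑ i, c i * μ i
        = blockPsum μ o j + (j : ℚ) / m * (∑ i, μ i - blockPsum μ o m) := by
      rw [← Finset.sum_add_sum_compl Bm, hsplitBm]
      have e1 : ∑ i ∈ Bj, c i * μ i = ∑ i ∈ Bj, μ i :=
        Finset.sum_congr rfl (fun i hi => by rw [hcval1 i hi, one_mul])
      have e2 : ∑ i ∈ Bm \ Bj, c i * μ i = 0 :=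
        Finset.sum_eq_zero (fun i hi => by rw [hcval2 i hi, zero_mul])
      have e3 : ∑ i ∈ Bmᶜ, c i * μ i = (j : ℚ) / m * ∑ i ∈ Bmᶜ, μ i := by
        rw [Finset.mul_sum]
        exact Finset.sum_congr rfl (fun i hi => by rw [hcval3 i hi])
      have e4 : ∑ i ∈ Bmᶜ, μ i = ∑ i, μ i - ∑ i ∈ Bm, μ i := by
        have := Finset.sum_add_sum_compl Bm μ
        linarith
      rw [e1, e2, e3, e4]
      have hpj : blockPsum μ o j = ∑ i ∈ Bj, μ i := rfl
      have hpm : blockPsum μ o m = ∑ i ∈ Bm, μ i := rfl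
      rw [hpj, hpm]
      ring
    have hsum2 : ∑ i, c i = (j : ℚ) + (j : ℚ) / m * ((n : ℚ) - m) := by
      rw [← Finset.sum_add_sum_compl Bm, hsplitBm]
      have e1 : ∑ i ∈ Bj, c i = (j : ℚ) := by
        rw [Finset.sum_congr rfl hcval1, Finset.sum_const, hcBj, nsmul_eq_mul, mul_one]
      have e2 : ∑ i ∈ Bm \ Bj, c i = 0 := Finset.sum_eq_zero hcval2
      have e3 : ∑ i ∈ Bmᶜ, c i = ((n - m : ℕ) : ℚ) * ((j : ℚ) / m) := by
        rw [Finset.sum_congr rfl hcval3, Finset.sum_const, hcBmc, nsmul_eq_mul]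
      rw [e1, e2, e3]
      have hmn : m ≤ n := by omega
      rw [Nat.cast_sub hmn]
      ring
    rw [hsum1, hsum2, psum_full] at key
    have hTT : ∑ i, σ i = ∑ i, μ i := by
      simp_rw [hσ]
      exact Equiv.sum_comp π μ
    rw [hTT] at key
    have hmne : (m : ℚ) ≠ 0 := ne_of_gt hm0
    have hnne : (n : ℚ) ≠ 0 := ne_of_gt hn0
    have halg : blockPsum μ o j - (j : ℚ) / m * blockPsum μ o m
        = blockPsum μ o j + (j : ℚ) / m * (∑ i, μ i - blockPsum μ o m)
          - ((j : ℚ) + (j : ℚ) / m * ((n : ℚ) - m)) / n * (∑ i, μ i) := by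
      field_simp
      ring
    rw [halg]
    exact key
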